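/- Let M and N be nonempty complete locally compact length spaces, both noncompact, and equip the product M × N with the max metric d((m₁,n₁),(m₂,n₂)) = max(d_M(m₁,m₂), d_N(n₁,n₂)). Then M × N has the loops-to-infinity property: every loop in M × N is, for every compact set K ⊆ M × N, freely homotopic to a loop contained in (M × N) ∖ K. -/

import Mathlib

/- Common definitions: path length, length/geodesic spaces, δ-covering groups,
   covering spectra, cut-off covering groups and spectra, free homotopy,
   loops-to-infinity. -/

open Metric Filter
open scoped NNReal ENNReal unitInterval

attribute [local instance] Path.Homotopic.setoid

/-- The length (total variation) of a path in a metric space. -/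
noncomputable def pathLength {X : Type*} [MetricSpace X] {x y : X} (γ : Path x y) : ℝ≥0∞ :=
  eVariationOn γ Set.univ

/-- A metric space is a length space if the distance between any two points is the
infimum of the lengths of paths joining them. -/
def IsLengthSpace (X : Type*) [MetricSpace X] : Prop :=
  ∀ x y : X, ENNReal.ofReal (dist x y) = ⨅ γ : Path x y, pathLength γ

/-- A metric space is a geodesic space if any two points are joined by a
distance-realizing path. -/
def IsGeodesicSpace (X : Type*) [MetricSpace X] : Prop :=
  ∀ x y : X, ∃ γ : Path x y, pathLength γ = ENNReal.ofReal (dist x y)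

/-- The element of the fundamental group at `p` represented by the loop
`α⁻¹ · β · α` (i.e. follow `α` from `p` to `y`, the loop `β` at `y`, then `α` back). -/
noncomputable def loopClass {X : Type*} [TopologicalSpace X] {p y : X}
    (α : Path p y) (β : Path y y) : FundamentalGroup X p :=
  FundamentalGroup.fromPath (X := TopCat.of X) ⟦(α.trans β).trans α.symm⟧

/-- The δ-covering group `π₁(X, δ, p)`: the normal subgroup of `π₁(X,p)` generated by
classes of loops `α⁻¹·β·α` with `β` lying in some open ball of radius `δ`. -/
noncomputable def coveringGroup (X : Type*) [MetricSpace X] (p : X) (δ : ℝ) :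
    Subgroup (FundamentalGroup X p) :=
  Subgroup.normalClosure
    {g | ∃ (y : X) (β : Path y y) (α : Path p y),
      (∃ c : X, ∀ t, β t ∈ Metric.ball c δ) ∧ g = loopClass α β}

/-- The covering spectrum of `X` (with basepoint `p`). -/
def covSpec (X : Type*) [MetricSpace X] (p : X) : Set ℝ :=
  {δ | 0 < δ ∧ ∀ δ' > δ, coveringGroup X p δ' ≠ coveringGroup X p δ}

/-- The `R` cut-off δ-covering group `π₁^{cut}(X, δ, R, x)`: the normal subgroup of
`π₁(X,x)` generated by classes of loops `α⁻¹·β·α` with `β` lying in some open ball of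
radius `δ` or in the complement of the closed ball `B̄(x,R)`. -/
noncomputable def cutCoveringGroup (X : Type*) [MetricSpace X] (x : X) (δ R : ℝ) :
    Subgroup (FundamentalGroup X x) :=
  Subgroup.normalClosure
    {g | ∃ (y : X) (β : Path y y) (α : Path x y),
      ((∃ c : X, ∀ t, β t ∈ Metric.ball c δ) ∨ (∀ t, β t ∉ Metric.closedBall x R)) ∧
      g = loopClass α β}

/-- The `R` cut-off covering spectrum of `(X,x)`. -/
def cutCovSpec (X : Type*) [MetricSpace X] (x : X) (R : ℝ) : Set ℝ :=
  {δ | 0 < δ ∧ ∀ δ' > δ, cutCoveringGroup X x δ' R ≠ cutCoveringGroup X x δ R}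

/-- Two loops are freely homotopic: there is a homotopy through (not necessarily
based) loops from one to the other. -/
def FreelyHomotopic {X : Type*} [TopologicalSpace X] {a b : X}
    (γ₀ : Path a a) (γ₁ : Path b b) : Prop :=
  ∃ H : C(I × I, X),
    (∀ t, H (0, t) = γ₀ t) ∧ (∀ t, H (1, t) = γ₁ t) ∧ ∀ s, H (s, 0) = H (s, 1)

/-- Two loops are freely homotopic within a subset `A`: the homotopy stays in `A`. -/
def FreelyHomotopicIn {X : Type*} [TopologicalSpace X] (A : Set X) {a b : X}
    (γ₀ : Path a a) (γ₁ : Path b b) : Prop :=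
  ∃ H : C(I × I, X),
    (∀ t, H (0, t) = γ₀ t) ∧ (∀ t, H (1, t) = γ₁ t) ∧ (∀ s, H (s, 0) = H (s, 1)) ∧
    ∀ p, H p ∈ A

/-- A loop has the loops-to-infinity property: for every compact set it is freely
homotopic to a loop outside that set. -/
def LoopToInfinity {X : Type*} [TopologicalSpace X] {a : X} (γ : Path a a) : Prop :=
  ∀ K : Set X, IsCompact K →
    ∃ (b : X) (η : Path b b), (∀ t, η t ∉ K) ∧ FreelyHomotopic γ η

/-- A space has the loops-to-infinity property if all of its loops do. -/
def LoopsToInfinity (X : Type*) [TopologicalSpace X] : Prop :=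
  ∀ (a : X) (γ : Path a a), LoopToInfinity γ

/-- Concatenation of a finite list of loops based at `q`. -/
noncomputable def loopConcat {X : Type*} [TopologicalSpace X] (q : X) :
    List (Path q q) → Path q q
  | [] => Path.refl q
  | γ :: rest => γ.trans (loopConcat q rest)

/-- A space is semilocally simply connected if every point has a neighborhood in which
every loop is null-homotopic in the whole space. -/
def SemilocallySimplyConnected (X : Type*) [TopologicalSpace X] : Prop :=
  ∀ x : X, ∃ U ∈ nhds x, ∀ (y : X) (γ : Path y y), (∀ t, γ t ∈ U) →
    γ.Homotopic (Path.refl y)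

/-- A pointed ε-Hausdorff approximation. -/
def IsPointedHausdorffApprox {Z₁ Z₂ : Type*} [MetricSpace Z₁] [MetricSpace Z₂]
    (f : Z₁ → Z₂) (p₁ : Z₁) (p₂ : Z₂) (ε : ℝ) : Prop :=
  f p₁ = p₂ ∧ (∀ a b : Z₁, |dist (f a) (f b) - dist a b| < ε) ∧
    ∀ z : Z₂, ∃ a : Z₁, dist z (f a) ≤ ε

instance coveringGroup_normal (X : Type*) [MetricSpace X] (p : X) (δ : ℝ) :
    (coveringGroup X p δ).Normal :=
  Subgroup.normalClosure_normal

instance cutCoveringGroup_normal (X : Type*) [MetricSpace X] (x : X) (δ R : ℝ) :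
    (cutCoveringGroup X x δ R).Normal :=
  Subgroup.normalClosure_normal

section LTIHelpers

open unitInterval

variable {X : Type*} [TopologicalSpace X]

/-- In a length space, any two points are joined by a path. -/
private lemma IsLengthSpace.nonempty_path {Y : Type*} [MetricSpace Y]
    (h : IsLengthSpace Y) (x y : Y) : Nonempty (Path x y) := by
  by_contra hne
  rw [not_nonempty_iff] at hne
  have h2 := h x y
  rw [iInf_of_empty] at h2
  exact ENNReal.ofReal_ne_top h2

private lemma freelyHomotopic_of_homotopic {a : X} {γ₀ γ₁ : Path a a}
    (h : γ₀.Homotopic γ₁) : FreelyHomotopic γ₀ γ₁ := by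
  obtain ⟨F⟩ := h
  exact ⟨F.toHomotopy.toContinuousMap, fun t => F.apply_zero t, fun t => F.apply_one t,
    fun s => by rw [show F.toHomotopy.toContinuousMap (s, 0) = F (s, 0) from rfl,
      show F.toHomotopy.toContinuousMap (s, 1) = F (s, 1) from rfl,
      Path.Homotopy.source, Path.Homotopy.target]⟩

private lemma FreelyHomotopic.trans' {a b c : X}
    {γ₀ : Path a a} {γ₁ : Path b b} {γ₂ : Path c c}
    (h₁ : FreelyHomotopic γ₀ γ₁) (h₂ : FreelyHomotopic γ₁ γ₂) :
    FreelyHomotopic γ₀ γ₂ := by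
  obtain ⟨H, H0, H1, Hl⟩ := h₁
  obtain ⟨G, G0, G1, Gl⟩ := h₂
  let F₁ : ContinuousMap.Homotopy γ₀.toContinuousMap γ₁.toContinuousMap :=
    { toContinuousMap := H, map_zero_left := H0, map_one_left := H1 }
  let F₂ : ContinuousMap.Homotopy γ₁.toContinuousMap γ₂.toContinuousMap :=
    { toContinuousMap := G, map_zero_left := G0, map_one_left := G1 }
  refine ⟨(F₁.trans F₂).toContinuousMap, fun t => (F₁.trans F₂).apply_zero t,
    fun t => (F₁.trans F₂).apply_one t, fun s => ?_⟩
  show (F₁.trans F₂) (s, 0) = (F₁.trans F₂) (s, 1)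
  rw [ContinuousMap.Homotopy.trans_apply, ContinuousMap.Homotopy.trans_apply]
  split_ifs with h
  · exact Hl _
  · exact Gl _

private lemma path_eval_eq {a b : X} (p : Path a b) {r : ℝ} (h : r ∈ Set.Icc (0 : ℝ) 1)
    (t : I) (hrt : r = (t : ℝ)) : p ⟨r, h⟩ = p t := by
  have : (⟨r, h⟩ : I) = t := Subtype.ext hrt
  rw [this]

/-- Conjugating a loop by a path gives a freely homotopic loop. -/
private lemma freelyHomotopic_conj {a b : X} (w : Path a b) (η : Path b b) :
    FreelyHomotopic ((w.trans η).trans w.symm) η := by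
  set L : Path a a := (w.trans η).trans w.symm with hLdef
  have hcont : Continuous fun p : I × I =>
      L.extend (max ((p.1 : ℝ) / 4) (min (p.2 : ℝ) (1 - (p.1 : ℝ) / 2))) := by
    apply L.continuous_extend.comp
    fun_prop
  have key : ∀ s : I, L.extend ((s : ℝ) / 4) = w s := by
    intro s
    have hmem : (s : ℝ) / 4 ∈ Set.Icc (0 : ℝ) 1 :=
      ⟨by linarith [s.2.1], by linarith [s.2.2]⟩
    rw [Path.extend_apply L hmem, hLdef, Path.trans_apply,
      dif_pos (by simpa using by linarith [s.2.2] : ((⟨_, hmem⟩ : I) : ℝ) ≤ 1 / 2),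
      Path.trans_apply, dif_pos (by simpa using by linarith [s.2.2])]
    congr 1
    ext
    show 2 * (2 * ((s : ℝ) / 4)) = (s : ℝ)
    ring
  have key2 : ∀ s : I, L.extend (1 - (s : ℝ) / 2) = w s := by
    intro s
    have hmem : 1 - (s : ℝ) / 2 ∈ Set.Icc (0 : ℝ) 1 :=
      ⟨by linarith [s.2.2], by linarith [s.2.1]⟩
    rw [Path.extend_apply L hmem, hLdef, Path.trans_apply]
    rcases lt_or_ge ((s : ℝ)) 1 with hs | hs
    · rw [dif_neg (by simpa using by linarith)]
      show w (σ _) = w s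
      congr 1
      ext
      show 1 - (2 * (1 - (s : ℝ) / 2) - 1) = (s : ℝ)
      ring
    · have hs1 : (s : ℝ) = 1 := le_antisymm s.2.2 hs
      rw [dif_pos (by simpa using by linarith)]
      rw [Path.trans_apply, dif_neg (by simpa using by linarith)]
      have hws : w s = η 1 := by
        have hseq : s = 1 := Subtype.ext hs1
        rw [hseq, w.target, η.target]
      rw [hws]
      congr 1
      ext
      show 2 * (2 * (1 - (s : ℝ) / 2)) - 1 = ((1 : I) : ℝ)
      rw [hs1]
      norm_num
  refine FreelyHomotopic.trans'
    (γ₁ := ((Path.refl b).trans η).trans (Path.refl b).symm)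
    ⟨⟨_, hcont⟩, fun t => ?_, fun t => ?_, fun s => ?_⟩
    (freelyHomotopic_of_homotopic ?_)
  · -- H (0, t) = L t
    show L.extend (max ((0 : ℝ) / 4) (min (t : ℝ) (1 - (0 : ℝ) / 2))) = L t
    rw [show max ((0 : ℝ) / 4) (min (t : ℝ) (1 - (0 : ℝ) / 2)) = (t : ℝ) by
      rw [show (1 : ℝ) - (0 : ℝ) / 2 = 1 by norm_num, min_eq_left t.2.2,
        show ((0 : ℝ) / 4) = 0 by norm_num, max_eq_right t.2.1]]
    exact L.extend_extends' t
  · -- H (1, t) = ((refl b).trans η).trans (refl b).symm t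
    show L.extend (max ((1 : ℝ) / 4) (min (t : ℝ) (1 - (1 : ℝ) / 2))) =
      (((Path.refl b).trans η).trans (Path.refl b).symm) t
    rw [Path.refl_symm]
    rcases le_or_gt (t : ℝ) (1 / 4) with h4 | h4
    · rw [show max ((1 : ℝ) / 4) (min (t : ℝ) (1 - (1 : ℝ) / 2)) = 1 / 4 by
        rw [max_eq_left]; exact le_trans (min_le_left _ _) h4]
      have hmem : (1 : ℝ) / 4 ∈ Set.Icc (0 : ℝ) 1 := by norm_num
      rw [Path.extend_apply L hmem, hLdef, Path.trans_apply,
        dif_pos (by norm_num), Path.trans_apply, dif_pos (by norm_num)]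
      rw [Path.trans_apply, dif_pos (by simpa using by linarith [t.2.1]),
        Path.trans_apply, dif_pos (by simpa using by linarith [t.2.1])]
      simp only [Path.refl_apply]
      exact (path_eval_eq w _ 1 (by rw [show ((1 : I) : ℝ) = 1 from rfl]; norm_num)).trans
        w.target
    · rcases le_or_gt (t : ℝ) (1 / 2) with h2 | h2
      · rw [show max ((1 : ℝ) / 4) (min (t : ℝ) (1 - (1 : ℝ) / 2)) = (t : ℝ) by
          rw [show (1 : ℝ) - (1 : ℝ) / 2 = 1 / 2 by norm_num, min_eq_left h2,
            max_eq_right h4.le]]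
        rw [L.extend_extends' t, hLdef, Path.trans_apply, dif_pos (by simpa using h2),
          Path.trans_apply, dif_neg (by simpa using by linarith)]
        rw [Path.trans_apply, dif_pos (by simpa using h2), Path.trans_apply,
          dif_neg (by simpa using by linarith)]
      · rw [show max ((1 : ℝ) / 4) (min (t : ℝ) (1 - (1 : ℝ) / 2)) = 1 / 2 by
          rw [show (1 : ℝ) - (1 : ℝ) / 2 = 1 / 2 by norm_num,
            min_eq_right h2.le, max_eq_right (by norm_num)]]
        have hmem : (1 : ℝ) / 2 ∈ Set.Icc (0 : ℝ) 1 := by norm_num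
        rw [Path.extend_apply L hmem, hLdef, Path.trans_apply, dif_pos (by norm_num),
          Path.trans_apply, dif_neg (by norm_num)]
        rw [Path.trans_apply, dif_neg (by simpa using h2)]
        show η _ = (Path.refl b).symm _
        rw [Path.refl_symm]
        simp only [Path.refl_apply]
        exact (path_eval_eq η _ 1 (by rw [show ((1 : I) : ℝ) = 1 from rfl]; norm_num)).trans
          η.target
  · -- H (s, 0) = H (s, 1)
    show L.extend (max ((s : ℝ) / 4) (min ((0 : I) : ℝ) (1 - (s : ℝ) / 2))) =
      L.extend (max ((s : ℝ) / 4) (min ((1 : I) : ℝ) (1 - (s : ℝ) / 2)))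
    have c0 : ((0 : I) : ℝ) = 0 := rfl
    have c1 : ((1 : I) : ℝ) = 1 := rfl
    rw [c0, c1,
      show min (0 : ℝ) (1 - (s : ℝ) / 2) = 0 from min_eq_left (by linarith [s.2.2]),
      show max ((s : ℝ) / 4) (0 : ℝ) = (s : ℝ) / 4 from max_eq_left (by linarith [s.2.1]),
      show min (1 : ℝ) (1 - (s : ℝ) / 2) = 1 - (s : ℝ) / 2 from
        min_eq_right (by linarith [s.2.1]),
      show max ((s : ℝ) / 4) (1 - (s : ℝ) / 2) = 1 - (s : ℝ) / 2 from
        max_eq_right (by linarith [s.2.2]),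
      key s, key2 s]
  · -- based homotopy
    rw [Path.refl_symm]
    have ha : (((Path.refl b).trans η).trans (Path.refl b)).Homotopic
        ((Path.refl b).trans η) := ⟨Path.Homotopy.transRefl _⟩
    have hb : ((Path.refl b).trans η).Homotopic η := ⟨Path.Homotopy.reflTrans η⟩
    exact Path.Homotopic.trans ha hb

private lemma path_prod_symm {Y : Type*} [TopologicalSpace Y] {a₁ a₂ : X} {b₁ b₂ : Y}
    (p : Path a₁ a₂) (q : Path b₁ b₂) :
    p.symm.prod q.symm = (p.prod q).symm := by
  ext t
  · rfl
  · rfl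

private lemma path_trans_forall {x y z : X} {p : Path x y} {q : Path y z}
    (Pr : X → Prop) (hp : ∀ t, Pr (p t)) (hq : ∀ t, Pr (q t)) :
    ∀ t, Pr ((p.trans q) t) := by
  intro t
  rw [Path.trans_apply]
  split_ifs
  · exact hp _
  · exact hq _

private lemma homotopic_symm₂ {x y : X} {p q : Path x y} (h : p.Homotopic q) :
    p.symm.Homotopic q.symm := by
  obtain ⟨F⟩ := h
  exact ⟨F.symm₂⟩

private lemma homotopic_word₁ {m m' : X} (γ₁ : Path m m) (σ₁ : Path m m') :
    γ₁.Homotopic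
      (((Path.refl m).trans
        (γ₁.trans ((σ₁.trans (Path.refl m')).trans
          ((Path.refl m').trans (σ₁.trans (Path.refl m')).symm)))).trans
        (Path.refl m).symm) := by
  set P₁ : Path m m' := σ₁.trans (Path.refl m') with hP₁
  refine Path.Homotopic.symm ?_
  rw [Path.refl_symm]
  have h1 : (((Path.refl m).trans
      (γ₁.trans (P₁.trans ((Path.refl m').trans P₁.symm)))).trans
      (Path.refl m)).Homotopic
      ((Path.refl m).trans (γ₁.trans (P₁.trans ((Path.refl m').trans P₁.symm)))) :=
    ⟨Path.Homotopy.transRefl _⟩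
  have h2 : ((Path.refl m).trans
      (γ₁.trans (P₁.trans ((Path.refl m').trans P₁.symm)))).Homotopic
      (γ₁.trans (P₁.trans ((Path.refl m').trans P₁.symm))) :=
    ⟨Path.Homotopy.reflTrans _⟩
  have h3 : (γ₁.trans (P₁.trans ((Path.refl m').trans P₁.symm))).Homotopic
      (γ₁.trans (P₁.trans P₁.symm)) :=
    Path.Homotopic.hcomp (Path.Homotopic.refl _)
      (Path.Homotopic.hcomp (Path.Homotopic.refl _) ⟨Path.Homotopy.reflTrans _⟩)
  have h4 : (γ₁.trans (P₁.trans P₁.symm)).Homotopic (γ₁.trans (Path.refl m)) :=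
    Path.Homotopic.hcomp (Path.Homotopic.refl _)
      (Path.Homotopic.symm ⟨Path.Homotopy.reflTransSymm P₁⟩)
  have h5 : (γ₁.trans (Path.refl m)).Homotopic γ₁ := ⟨Path.Homotopy.transRefl _⟩
  exact (((h1.trans h2).trans h3).trans h4).trans h5

private lemma homotopic_word₂ {n n' : X} (γ₂ : Path n n) (σ₂ : Path n n') :
    γ₂.Homotopic
      ((σ₂.trans ((Path.refl n').trans
        (((Path.refl n').trans σ₂.symm).trans
          (γ₂.trans ((Path.refl n').trans σ₂.symm).symm)))).trans σ₂.symm) := by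
  refine Path.Homotopic.symm ?_
  set P₂ : Path n' n := (Path.refl n').trans σ₂.symm with hP₂def
  have hP : P₂.Homotopic σ₂.symm := ⟨Path.Homotopy.reflTrans _⟩
  have hPs : P₂.symm.Homotopic σ₂ := by
    have h2 := homotopic_symm₂ hP
    rwa [Path.symm_symm] at h2
  have h1 : ((σ₂.trans ((Path.refl n').trans (P₂.trans (γ₂.trans P₂.symm)))).trans
      σ₂.symm).Homotopic
      ((σ₂.trans (P₂.trans (γ₂.trans P₂.symm))).trans σ₂.symm) :=
    Path.Homotopic.hcomp
      (Path.Homotopic.hcomp (Path.Homotopic.refl _) ⟨Path.Homotopy.reflTrans _⟩)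
      (Path.Homotopic.refl _)
  have h2 : ((σ₂.trans (P₂.trans (γ₂.trans P₂.symm))).trans σ₂.symm).Homotopic
      ((σ₂.trans (σ₂.symm.trans (γ₂.trans σ₂))).trans σ₂.symm) :=
    Path.Homotopic.hcomp
      (Path.Homotopic.hcomp (Path.Homotopic.refl _)
        (Path.Homotopic.hcomp hP
          (Path.Homotopic.hcomp (Path.Homotopic.refl _) hPs)))
      (Path.Homotopic.refl _)
  have h3 : ((σ₂.trans (σ₂.symm.trans (γ₂.trans σ₂))).trans σ₂.symm).Homotopic
      (((σ₂.trans σ₂.symm).trans (γ₂.trans σ₂)).trans σ₂.symm) :=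
    Path.Homotopic.hcomp
      (Path.Homotopic.symm ⟨Path.Homotopy.transAssoc _ _ _⟩)
      (Path.Homotopic.refl _)
  have h4 : (((σ₂.trans σ₂.symm).trans (γ₂.trans σ₂)).trans σ₂.symm).Homotopic
      (((Path.refl n).trans (γ₂.trans σ₂)).trans σ₂.symm) :=
    Path.Homotopic.hcomp
      (Path.Homotopic.hcomp
        (Path.Homotopic.symm ⟨Path.Homotopy.reflTransSymm σ₂⟩)
        (Path.Homotopic.refl _))
      (Path.Homotopic.refl _)
  have h5 : (((Path.refl n).trans (γ₂.trans σ₂)).trans σ₂.symm).Homotopic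
      ((γ₂.trans σ₂).trans σ₂.symm) :=
    Path.Homotopic.hcomp ⟨Path.Homotopy.reflTrans _⟩ (Path.Homotopic.refl _)
  have h6 : ((γ₂.trans σ₂).trans σ₂.symm).Homotopic (γ₂.trans (σ₂.trans σ₂.symm)) :=
    ⟨Path.Homotopy.transAssoc _ _ _⟩
  have h7 : (γ₂.trans (σ₂.trans σ₂.symm)).Homotopic (γ₂.trans (Path.refl n)) :=
    Path.Homotopic.hcomp (Path.Homotopic.refl _)
      (Path.Homotopic.symm ⟨Path.Homotopy.reflTransSymm σ₂⟩)
  have h8 : (γ₂.trans (Path.refl n)).Homotopic γ₂ := ⟨Path.Homotopy.transRefl _⟩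
  exact ((((((h1.trans h2).trans h3).trans h4).trans h5).trans h6).trans h7).trans h8

private lemma freelyHomotopic_prod_escape {M' N' : Type*} [TopologicalSpace M']
    [TopologicalSpace N'] {m : M'} {n : N'} {m' : M'} {n' : N'}
    (γ₁ : Path m m) (γ₂ : Path n n) (σ₁ : Path m m') (σ₂ : Path n n') :
    FreelyHomotopic (γ₁.prod γ₂)
      ((γ₁.prod (Path.refl n')).trans
        (((σ₁.prod (Path.refl n')).trans ((Path.refl m').prod σ₂.symm)).trans
          (((Path.refl m').prod γ₂).trans
            ((σ₁.prod (Path.refl n')).trans ((Path.refl m').prod σ₂.symm)).symm))) := by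
  refine FreelyHomotopic.trans' (freelyHomotopic_of_homotopic ?_)
    (freelyHomotopic_conj ((Path.refl m).prod σ₂) _)
  have e : ((((Path.refl m).trans
        (γ₁.trans ((σ₁.trans (Path.refl m')).trans
          ((Path.refl m').trans (σ₁.trans (Path.refl m')).symm)))).trans
        (Path.refl m).symm).prod
      ((σ₂.trans ((Path.refl n').trans
        (((Path.refl n').trans σ₂.symm).trans
          (γ₂.trans ((Path.refl n').trans σ₂.symm).symm)))).trans σ₂.symm)) =
      (((Path.refl m).prod σ₂).trans
        ((γ₁.prod (Path.refl n')).trans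
          (((σ₁.prod (Path.refl n')).trans ((Path.refl m').prod σ₂.symm)).trans
            (((Path.refl m').prod γ₂).trans
              ((σ₁.prod (Path.refl n')).trans
                ((Path.refl m').prod σ₂.symm)).symm)))).trans
        ((Path.refl m).prod σ₂).symm := by
    simp only [← Path.trans_prod_eq_prod_trans, path_prod_symm]
  rw [← e]
  exact ⟨Path.Homotopic.prodHomotopy (homotopic_word₁ γ₁ σ₁).some
    (homotopic_word₂ γ₂ σ₂).some⟩

end LTIHelpers

/-- The product (with the max metric, which is the metric on `M × N` in
Mathlib) of two nonempty noncompact complete locally compact length spaces has the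
loops-to-infinity property. -/
theorem loopsToInfinity_prod
    {M N : Type*} [MetricSpace M] [MetricSpace N]
    [Nonempty M] [Nonempty N] [CompleteSpace M] [CompleteSpace N]
    [LocallyCompactSpace M] [LocallyCompactSpace N]
    [NoncompactSpace M] [NoncompactSpace N]
    (hM : IsLengthSpace M) (hN : IsLengthSpace N) :
    LoopsToInfinity (M × N) := by
  intro a γ K hK
  have hK₁ : IsCompact (Prod.fst '' K) := hK.image continuous_fst
  have hK₂ : IsCompact (Prod.snd '' K) := hK.image continuous_snd
  obtain ⟨m', hm'⟩ : ∃ m' : M, m' ∉ Prod.fst '' K := by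
    by_contra h
    push_neg at h
    exact hK₁.ne_univ (Set.eq_univ_of_forall h)
  obtain ⟨n', hn'⟩ : ∃ n' : N, n' ∉ Prod.snd '' K := by
    by_contra h
    push_neg at h
    exact hK₂.ne_univ (Set.eq_univ_of_forall h)
  obtain ⟨σ₁⟩ := hM.nonempty_path a.1 m'
  obtain ⟨σ₂⟩ := hN.nonempty_path a.2 n'
  set γ₁ : Path a.1 a.1 := γ.map continuous_fst with hγ₁
  set γ₂ : Path a.2 a.2 := γ.map continuous_snd with hγ₂
  set P : Path (a.1, n') (m', a.2) :=
    (σ₁.prod (Path.refl n')).trans ((Path.refl m').prod σ₂.symm) with hP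
  set E : Path (a.1, n') (a.1, n') :=
    (γ₁.prod (Path.refl n')).trans
      (P.trans (((Path.refl m').prod γ₂).trans P.symm)) with hE
  have hpredP : ∀ t, (P t).1 = m' ∨ (P t).2 = n' := by
    rw [hP]
    apply path_trans_forall (fun z : M × N => z.1 = m' ∨ z.2 = n')
    · intro t
      right
      rfl
    · intro t
      left
      rfl
  have hpred : ∀ t, (E t).1 = m' ∨ (E t).2 = n' := by
    rw [hE]
    apply path_trans_forall (fun z : M × N => z.1 = m' ∨ z.2 = n')
    · intro t
      right
      rfl
    apply path_trans_forall (fun z : M × N => z.1 = m' ∨ z.2 = n') hpredP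
    apply path_trans_forall (fun z : M × N => z.1 = m' ∨ z.2 = n')
    · intro t
      left
      rfl
    · exact fun t => hpredP (unitInterval.symm t)
  refine ⟨(a.1, n'), E, fun t ht => ?_, ?_⟩
  · rcases hpred t with h | h
    · exact hm' ⟨E t, ht, h⟩
    · exact hn' ⟨E t, ht, h⟩
  · have hγprod : γ₁.prod γ₂ = γ := by
      ext t
      · rfl
      · rfl
    have := freelyHomotopic_prod_escape γ₁ γ₂ σ₁ σ₂
    rw [hγprod] at this
    exact this
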